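/- For the Random String model with k = 2 and 1-reach, the transfer matrix characteristic polynomial g(λ,b) = −(1/128)·λ³·(b − 2λ)(b − 4λ)(b³ + b²(−8λ + 1) + 2bλ(−1 + 10λ) + 4λ²(−4λ + 1)) satisfies: g(1,1) = 0, dg(1,b)/db |_{b=1} = −21/128, ((λ−1)/g(λ,1))|_{λ=1} = 64/15, and hence the implicit root derivative df₁/db |_{b=1} = (−21/128)·(64/15)·(−1)·(−1) = 7/10. Consequently γ_{2,1} = 7/10. -/

import Mathlib

open Filter

/-- Characteristic polynomial of the transfer matrix for the Random String
model with `k = 2` and 1-reach. -/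
noncomputable def gRS (l b : ℝ) : ℝ :=
  -(1 / 128) * l ^ 3 * (b - 2 * l) * (b - 4 * l) *
    (b ^ 3 + b ^ 2 * (-8 * l + 1) + 2 * b * l * (-1 + 10 * l)
      + 4 * l ^ 2 * (-4 * l + 1))

/-- Random String model, `k = 2`, 1-reach: `g(1,1) = 0`,
`dg(1,b)/db |_{b=1} = -21/128`, the removable-singularity value of
`(λ-1)/g(λ,1)` at `λ = 1` is `64/15`, and any implicitly defined
differentiable root `f₁` with `f₁ 1 = 1` satisfies `f₁'(1) = 7/10`;
consequently `γ_{2,1} = 7/10`. -/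
theorem gamma_21_RS :
    gRS 1 1 = 0 ∧
    deriv (fun b => gRS 1 b) 1 = -21 / 128 ∧
    Tendsto (fun l => (l - 1) / gRS l 1) (nhdsWithin 1 {(1 : ℝ)}ᶜ)
      (nhds (64 / 15)) ∧
    ∀ f₁ : ℝ → ℝ, f₁ 1 = 1 →
      (∀ᶠ b in nhds 1, gRS (f₁ b) b = 0) →
      DifferentiableAt ℝ f₁ 1 →
      deriv f₁ 1 = 7 / 10 := by
  refine ⟨by norm_num [gRS], ?_, ?_, ?_⟩
  · -- derivative of g(1,·) at b = 1
    have heq : (fun b : ℝ => gRS 1 b)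
        = fun b => -(1/128) * (b^5 - 13*b^4 + 68*b^3 - 176*b^2 + 216*b - 96) := by
      funext b; simp only [gRS]; ring
    have h := (((((((hasDerivAt_pow 5 (1:ℝ)).sub ((hasDerivAt_pow 4 (1:ℝ)).const_mul 13)).add
        ((hasDerivAt_pow 3 (1:ℝ)).const_mul 68)).sub ((hasDerivAt_pow 2 (1:ℝ)).const_mul 176)).add
        ((hasDerivAt_id (1:ℝ)).const_mul 216)).sub_const 96).const_mul (-(1/128) : ℝ))
    simp only [id_eq, Pi.sub_def, Pi.add_def] at h
    rw [heq, h.deriv]; norm_num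
  · -- removable singularity value of (λ-1)/g(λ,1) at λ = 1
    have hcont : ContinuousAt
        (fun l : ℝ => (-(1/128) * l^3 * (1 - 2*l) * (1 - 4*l) * (-16*l^2 + 8*l - 2))⁻¹) 1 := by
      apply ContinuousAt.inv₀ (by fun_prop) (by norm_num)
    have h1 : Tendsto
        (fun l : ℝ => (-(1/128) * l^3 * (1 - 2*l) * (1 - 4*l) * (-16*l^2 + 8*l - 2))⁻¹)
        (nhdsWithin 1 {(1 : ℝ)}ᶜ) (nhds (64/15)) := by
      have h2 := (hcont.continuousWithinAt (s := {(1:ℝ)}ᶜ)).tendsto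
      convert h2 using 2; norm_num
    refine h1.congr' ?_
    filter_upwards [self_mem_nhdsWithin] with l hl
    have hl1 : l - 1 ≠ 0 := sub_ne_zero.mpr hl
    have hg : gRS l 1
        = (l - 1) * (-(1/128) * l^3 * (1 - 2*l) * (1 - 4*l) * (-16*l^2 + 8*l - 2)) := by
      simp only [gRS]; ring
    rw [hg, div_mul_cancel_left₀ hl1]
  · -- implicit root derivative
    intro f₁ hf1 hroot hdiff
    set d := deriv f₁ 1 with hd
    have hf : HasDerivAt f₁ d 1 := hdiff.hasDerivAt
    have hnearf : ∀ᶠ b in nhds 1, f₁ b ∈ Set.Ioo (7/8 : ℝ) (9/8) := by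
      have : Set.Ioo (7/8 : ℝ) (9/8) ∈ nhds (f₁ 1) := by
        rw [hf1]; exact Ioo_mem_nhds (by norm_num) (by norm_num)
      exact hdiff.continuousAt.eventually_mem this
    have hnearb : ∀ᶠ b in nhds (1:ℝ), b ∈ Set.Ioo (7/8 : ℝ) (9/8) :=
      Ioo_mem_nhds (by norm_num) (by norm_num)
    have hC : ∀ᶠ b in nhds (1:ℝ),
        b ^ 3 + b ^ 2 * (-8 * f₁ b + 1) + 2 * b * (f₁ b) * (-1 + 10 * f₁ b)
          + 4 * (f₁ b) ^ 2 * (-4 * f₁ b + 1) = 0 := by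
      filter_upwards [hroot, hnearf, hnearb] with b hg hl hb
      obtain ⟨hl1, hl2⟩ := hl
      obtain ⟨hb1, hb2⟩ := hb
      have hp : (0:ℝ) < (f₁ b) ^ 3 := by positivity
      have h2 : b - 2 * f₁ b < 0 := by nlinarith
      have h3 : b - 4 * f₁ b < 0 := by nlinarith
      have hK : -(1/128) * (f₁ b) ^ 3 * (b - 2 * f₁ b) * (b - 4 * f₁ b) ≠ 0 :=
        mul_ne_zero (mul_ne_zero (mul_ne_zero (by norm_num) hp.ne') h2.ne) h3.ne
      simp only [gRS] at hg
      rcases mul_eq_zero.mp hg with h | h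
      · exact absurd h hK
      · exact h
    have hb : HasDerivAt (fun b : ℝ => b) 1 1 := hasDerivAt_id 1
    have h1 : HasDerivAt (fun b : ℝ => b ^ 3 + b ^ 2 * (-8 * f₁ b + 1)
          + 2 * b * (f₁ b) * (-1 + 10 * f₁ b) + 4 * (f₁ b) ^ 2 * (-4 * f₁ b + 1))
        ((3*1^2) + ((2*1^1) * (-8 * f₁ 1 + 1) + 1^2 * (-8 * d))
          + ((2 * f₁ 1 + 2 * 1 * d) * (-1 + 10 * f₁ 1) + 2 * 1 * f₁ 1 * (10 * d))
          + (4 * (2 * f₁ 1 * d) * (-4 * f₁ 1 + 1) + 4 * (f₁ 1)^2 * (-4 * d))) 1 := by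
      have t1 : HasDerivAt (fun b : ℝ => b ^ 3) (3*1^2) 1 := by
        simpa using hasDerivAt_pow 3 (1:ℝ)
      have t2 : HasDerivAt (fun b : ℝ => b ^ 2 * (-8 * f₁ b + 1))
          ((2*1^1) * (-8 * f₁ 1 + 1) + 1^2 * (-8 * d)) 1 := by
        simpa [Pi.mul_def] using (hasDerivAt_pow 2 (1:ℝ)).mul ((hf.const_mul (-8)).add_const 1)
      have t3 : HasDerivAt (fun b : ℝ => 2 * b * (f₁ b) * (-1 + 10 * f₁ b))
          ((2 * f₁ 1 + 2 * 1 * d) * (-1 + 10 * f₁ 1) + 2 * 1 * f₁ 1 * (10 * d)) 1 := by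
        have := (((hb.const_mul 2).mul hf).mul ((hf.const_mul 10).const_add (-1)))
        simpa [Pi.mul_def] using this
      have t4 : HasDerivAt (fun b : ℝ => 4 * (f₁ b) ^ 2 * (-4 * f₁ b + 1))
          (4 * (2 * f₁ 1 * d) * (-4 * f₁ 1 + 1) + 4 * (f₁ 1)^2 * (-4 * d)) 1 := by
        have := (((hf.pow 2).const_mul 4).mul ((hf.const_mul (-4)).add_const 1))
        simpa [Pi.mul_def, mul_comm, mul_assoc, mul_left_comm] using this
      exact ((t1.add t2).add t3).add t4
    have hzero : deriv (fun b : ℝ => b ^ 3 + b ^ 2 * (-8 * f₁ b + 1)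
          + 2 * b * (f₁ b) * (-1 + 10 * f₁ b) + 4 * (f₁ b) ^ 2 * (-4 * f₁ b + 1)) 1 = 0 := by
      have heq0 : (fun b : ℝ => b ^ 3 + b ^ 2 * (-8 * f₁ b + 1)
          + 2 * b * (f₁ b) * (-1 + 10 * f₁ b) + 4 * (f₁ b) ^ 2 * (-4 * f₁ b + 1))
          =ᶠ[nhds 1] (fun _ => 0) := hC
      rw [heq0.deriv_eq, deriv_const]
    rw [h1.deriv] at hzero
    rw [hf1] at hzero
    linarith
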